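/- If a spanning tree T of a connected weighted graph satisfies the path optimality condition (for every non-tree edge (k,l), its cost is at least the cost of every edge on the unique tree path from k to l), then T is a minimum spanning tree. -/

import Mathlib

/-- A minimum spanning tree of a weighted graph. -/
def IsMST {V : Type*} (G : SimpleGraph V) (c : Sym2 V → ℝ) (T : SimpleGraph V) : Prop :=
  T.IsTree ∧ T ≤ G ∧
    ∀ T' : SimpleGraph V, T'.IsTree → T' ≤ G →
      (∑ᶠ e ∈ T.edgeSet, c e) ≤ ∑ᶠ e ∈ T'.edgeSet, c e

open SimpleGraph

/-- After deleting one edge `s(k,l)`, every vertex reachable (in the original graph)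
from a vertex reachable from `k` or `l` is still reachable from `k` or `l`. -/
private lemma reach_endpoints {V : Type*} {G : SimpleGraph V} {k l : V} :
    ∀ {a b : V} (_ : G.Walk a b),
      ((G.deleteEdges {s(k,l)}).Reachable k a ∨ (G.deleteEdges {s(k,l)}).Reachable l a) →
      ((G.deleteEdges {s(k,l)}).Reachable k b ∨ (G.deleteEdges {s(k,l)}).Reachable l b) := by
  intro a b p
  induction p with
  | nil => exact id
  | @cons u v w hadj q ih =>
    intro h
    apply ih
    by_cases he : s(u, v) = s(k, l)
    · rw [Sym2.eq_iff] at he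
      rcases he with ⟨hu, hv⟩ | ⟨hu, hv⟩
      · cases hv; exact Or.inr (Reachable.refl _)
      · cases hv; exact Or.inl (Reachable.refl _)
    · have hadj' : (G.deleteEdges {s(k,l)}).Adj u v := by
        simp [hadj, he]
      rcases h with h | h
      · exact Or.inl (h.trans hadj'.reachable)
      · exact Or.inr (h.trans hadj'.reachable)

/-- A walk starting inside `S` and ending outside `S` contains an edge crossing `S`. -/
private lemma exists_crossing {V : Type*} {T : SimpleGraph V} (S : Set V) :
    ∀ {a b : V} (p : T.Walk a b), a ∈ S → b ∉ S →
      ∃ x y, T.Adj x y ∧ s(x,y) ∈ p.edges ∧ x ∈ S ∧ y ∉ S := by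
  intro a b p
  induction p with
  | nil => exact fun ha hb => absurd ha hb
  | @cons u v w hadj q ih =>
    intro ha hb
    by_cases hv : v ∈ S
    · obtain ⟨x, y, h1, h2, h3, h4⟩ := ih hv hb
      exact ⟨x, y, h1, by simp [h2], h3, h4⟩
    · exact ⟨u, v, hadj, by simp, ha, hv⟩

/-- if a spanning tree `T` of a connected weighted graph `G` satisfies the
path optimality condition (every non-tree edge `(k,l)` of `G` costs at least as much as
every edge on the unique tree path from `k` to `l`), then `T` is a minimum spanning tree. -/
theorem path_optimality_implies_mst {V : Type*} [Fintype V]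
    (G T : SimpleGraph V) (c : Sym2 V → ℝ)
    (hG : G.Connected) (hT : T.IsTree) (hTG : T ≤ G)
    (hopt : ∀ k l : V, G.Adj k l → ¬ T.Adj k l →
      ∀ p : T.Walk k l, p.IsPath → ∀ e ∈ p.edges, c e ≤ c s(k, l)) :
    IsMST G c T := by
  classical
  refine ⟨hT, hTG, ?_⟩
  suffices H : ∀ n (T' : SimpleGraph V), T'.IsTree → T' ≤ G →
      (T'.edgeSet \ T.edgeSet).ncard = n →
      (∑ᶠ e ∈ T.edgeSet, c e) ≤ ∑ᶠ e ∈ T'.edgeSet, c e by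
    intro T' h1 h2
    exact H _ T' h1 h2 rfl
  intro n
  induction n using Nat.strong_induction_on with
  | _ n ih =>
  intro T' hT' hT'G hn
  have hfinT : T.edgeSet.Finite := Set.toFinite _
  have hfinT' : T'.edgeSet.Finite := Set.toFinite _
  rcases Nat.eq_zero_or_pos n with h0 | hpos
  · -- base case: every edge of T' is an edge of T, hence T' = T
    subst h0
    rw [Set.ncard_eq_zero hfinT'.diff] at hn
    have hsub : T'.edgeSet ⊆ T.edgeSet := Set.diff_eq_empty.mp hn
    have hcard : T.edgeSet.ncard ≤ T'.edgeSet.ncard := by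
      have h1 := hT.card_edgeFinset
      have h2 := hT'.card_edgeFinset
      have e1 : T.edgeSet.ncard = T.edgeFinset.card := by
        rw [← Set.ncard_coe_finset, coe_edgeFinset]
      have e2 : T'.edgeSet.ncard = T'.edgeFinset.card := by
        rw [← Set.ncard_coe_finset, coe_edgeFinset]
      omega
    rw [Set.eq_of_subset_of_ncard_le hsub hcard hfinT]
  · -- inductive step: exchange an edge
    have hne : (T'.edgeSet \ T.edgeSet).Nonempty :=
      Set.nonempty_of_ncard_ne_zero (by omega)
    obtain ⟨e', he'T', he'T⟩ := hne
    induction e' using Sym2.ind with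
    | _ k l =>
    rw [mem_edgeSet] at he'T'
    have hTkl : ¬ T.Adj k l := fun h => he'T (T.mem_edgeSet.mpr h)
    have hGkl : G.Adj k l := hT'G he'T'
    obtain ⟨p, hp, -⟩ := hT.existsUnique_path k l
    set S : Set V := {v | (T'.deleteEdges {s(k,l)}).Reachable k v} with hS
    have hkS : k ∈ S := Reachable.refl k
    have hlS : l ∉ S := by
      intro hl
      obtain ⟨u, cy, hcyc, -⟩ :=
        (adj_and_reachable_delete_edges_iff_exists_cycle).mp ⟨he'T', hl⟩
      exact hT'.2 cy hcyc
    obtain ⟨x, y, hxy, hfp, hxS, hyS⟩ := exists_crossing S p hkS hlS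
    have hfT : s(x,y) ∈ T.edgeSet := T.mem_edgeSet.mpr hxy
    have hfe : s(x,y) ≠ s(k,l) := fun h => he'T (h ▸ hfT)
    have hyl : (T'.deleteEdges {s(k,l)}).Reachable l y := by
      rcases (hT'.isConnected k y).elim fun w =>
          reach_endpoints w (Or.inl (Reachable.refl k)) with h | h
      · exact absurd h hyS
      · exact h
    have hfT' : s(x,y) ∉ T'.edgeSet := by
      intro h
      have : (T'.deleteEdges {s(k,l)}).Adj x y := by
        rw [deleteEdges_adj]
        exact ⟨T'.mem_edgeSet.mp h, by simpa using hfe⟩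
      exact hyS (hxS.trans this.reachable)
    have hcf : c s(x,y) ≤ c s(k,l) := hopt k l hGkl hTkl p hp _ hfp
    -- the exchanged graph
    set T'' : SimpleGraph V :=
      SimpleGraph.fromEdgeSet (insert s(x,y) (T'.edgeSet \ {s(k,l)})) with hT''
    have hE : T''.edgeSet = insert s(x,y) (T'.edgeSet \ {s(k,l)}) := by
      rw [hT'', edgeSet_fromEdgeSet]
      ext e
      simp only [Set.mem_diff, Set.mem_insert_iff, Set.mem_setOf_eq, Set.mem_singleton_iff]
      constructor
      · tauto
      · rintro (rfl | ⟨h1, h2⟩)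
        · exact ⟨Or.inl rfl, fun hd => hxy.ne (Sym2.mk_isDiag_iff.mp hd)⟩
        · exact ⟨Or.inr ⟨h1, h2⟩, fun hd => (T'.not_isDiag_of_mem_edgeSet h1) hd⟩
    have hmono : T'.deleteEdges {s(k,l)} ≤ T'' := by
      intro u v huv
      rw [deleteEdges_adj] at huv
      rw [hT'', fromEdgeSet_adj]
      exact ⟨Or.inr ⟨T'.mem_edgeSet.mpr huv.1, huv.2⟩, huv.1.ne⟩
    have hxyT'' : T''.Adj x y := by
      rw [hT'', fromEdgeSet_adj]
      exact ⟨Or.inl rfl, hxy.ne⟩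
    have hreachK : ∀ v, T''.Reachable k v := by
      have hkx : T''.Reachable k x := Reachable.mono hmono hxS
      have hly : T''.Reachable l y := Reachable.mono hmono hyl
      have hkl' : T''.Reachable k l := hkx.trans (hxyT''.reachable.trans hly.symm)
      intro v
      rcases (hT'.isConnected k v).elim fun w =>
          reach_endpoints w (Or.inl (Reachable.refl k)) with h | h
      · exact Reachable.mono hmono h
      · exact hkl'.trans (Reachable.mono hmono h)
    have hT''conn : T''.Connected := by
      rw [connected_iff]
      exact ⟨fun u v => (hreachK u).symm.trans (hreachK v), hT'.isConnected.nonempty⟩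
    have hT''le : T'' ≤ G := by
      intro u v huv
      rw [hT'', fromEdgeSet_adj] at huv
      rcases huv.1 with h | ⟨h, -⟩
      · have hm : s(u,v) ∈ G.edgeSet := by rw [h]; exact G.mem_edgeSet.mpr (hTG hxy)
        exact G.mem_edgeSet.mp hm
      · exact hT'G (T'.mem_edgeSet.mp h)
    have hT''ac : T''.IsAcyclic := by
      intro u cy hcyc
      by_cases hf : s(x,y) ∈ cy.edges
      · have hreach := ((adj_and_reachable_delete_edges_iff_exists_cycle
            (G := T'') (v := x) (w := y)).mpr ⟨u, cy, hcyc, hf⟩).2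
        have hle : (T''.deleteEdges {s(x,y)}) ≤ T'.deleteEdges {s(k,l)} := by
          intro a b hab
          rw [deleteEdges_adj] at hab ⊢
          obtain ⟨hab1, hab2⟩ := hab
          have := (T''.mem_edgeSet.mpr hab1)
          rw [hE] at this
          rcases this with h | ⟨h1, h2⟩
          · exact absurd h hab2
          · exact ⟨T'.mem_edgeSet.mp h1, h2⟩
        exact hyS (hxS.trans (Reachable.mono hle hreach))
      · have hsub : ∀ e ∈ cy.edges, e ∈ T'.edgeSet := by
          intro e he
          have := cy.edges_subset_edgeSet he
          rw [hE] at this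
          rcases this with h | ⟨h1, -⟩
          · exact absurd (h ▸ he) hf
          · exact h1
        exact hT'.2 (cy.transfer T' hsub) (hcyc.transfer hsub)
    have hT''tree : T''.IsTree := ⟨hT''conn, hT''ac⟩
    -- edge sets as finsets
    have hfinT'' : T''.edgeSet.Finite := Set.toFinite _
    have hEfin : hfinT''.toFinset = insert s(x,y) (hfinT'.toFinset.erase s(k,l)) := by
      ext e
      simp only [Set.Finite.mem_toFinset, hE, Set.mem_insert_iff, Set.mem_diff,
        Set.mem_singleton_iff, Finset.mem_insert, Finset.mem_erase]
      tauto
    have he'mem : s(k,l) ∈ hfinT'.toFinset := by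
      rw [Set.Finite.mem_toFinset]; exact T'.mem_edgeSet.mpr he'T'
    have hfmem : s(x,y) ∉ hfinT'.toFinset.erase s(k,l) := by
      simp only [Finset.mem_erase, Set.Finite.mem_toFinset]
      exact fun h => hfT' h.2
    -- the sum over T'' edges
    have hsum : (∑ᶠ e ∈ T''.edgeSet, c e) = (∑ᶠ e ∈ T'.edgeSet, c e) - c s(k,l) + c s(x,y) := by
      rw [finsum_mem_eq_finite_toFinset_sum _ hfinT'', finsum_mem_eq_finite_toFinset_sum _ hfinT',
        hEfin, Finset.sum_insert hfmem, Finset.sum_erase_eq_sub he'mem]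
      ring
    -- the difference shrinks
    have hdiff : T''.edgeSet \ T.edgeSet = (T'.edgeSet \ T.edgeSet) \ {s(k,l)} := by
      rw [hE]
      ext e
      simp only [Set.mem_insert_iff, Set.mem_diff, Set.mem_singleton_iff]
      constructor
      · rintro ⟨rfl | ⟨h1, h2⟩, h3⟩
        · exact absurd hfT h3
        · exact ⟨⟨h1, h3⟩, h2⟩
      · rintro ⟨⟨h1, h3⟩, h2⟩
        exact ⟨Or.inr ⟨h1, h2⟩, h3⟩
    have hncard : (T''.edgeSet \ T.edgeSet).ncard = n - 1 := by
      have hmem : s(k,l) ∈ T'.edgeSet \ T.edgeSet := ⟨T'.mem_edgeSet.mpr he'T', he'T⟩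
      rw [hdiff, Set.ncard_diff_singleton_of_mem hmem, hn]
    have hle := ih (n - 1) (by omega) T'' hT''tree hT''le hncard
    calc (∑ᶠ e ∈ T.edgeSet, c e) ≤ ∑ᶠ e ∈ T''.edgeSet, c e := hle
      _ = (∑ᶠ e ∈ T'.edgeSet, c e) - c s(k,l) + c s(x,y) := hsum
      _ ≤ ∑ᶠ e ∈ T'.edgeSet, c e := by linarith
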